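/- Let F : [0,∞) → [0,∞) be an increasing function with F(x)/x → ∞ as x → ∞. Then the series M_F(z) = Σ_{n=1}^∞ (z^n / n²) e^{−F*(n)} converges absolutely for every z ∈ ℂ, defines an entire function of z, and satisfies |M_F(z)| ≤ (π²/6) · e^{F(log₊ |z|)} for all z ∈ ℂ. -/

import Mathlib

set_option maxHeartbeats 1000000

/-- The Legendre transform `F*(y) = sup_{x ≥ 0} (x·y − F(x))`. -/
noncomputable def Fstar (F : ℝ → ℝ) (y : ℝ) : ℝ :=
  sSup {v : ℝ | ∃ x : ℝ, 0 ≤ x ∧ v = x * y - F x}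

/-- `M_F(z) = Σ_{n ≥ 1} (zⁿ/n²)·e^{−F*(n)}`. -/
noncomputable def MF (F : ℝ → ℝ) (z : ℂ) : ℂ :=
  ∑' n : ℕ, z ^ (n + 1) / ((n : ℂ) + 1) ^ 2 * (Real.exp (-(Fstar F ((n : ℝ) + 1))) : ℂ)

lemma Fstar_bddAbove (F : ℝ → ℝ) (hF_nonneg : ∀ x : ℝ, 0 ≤ x → 0 ≤ F x)
    (hF_grow : Filter.Tendsto (fun x : ℝ => F x / x) Filter.atTop Filter.atTop) (y : ℝ) :
    BddAbove {v : ℝ | ∃ x : ℝ, 0 ≤ x ∧ v = x * y - F x} := by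
  obtain ⟨X, hX⟩ := Filter.eventually_atTop.mp (Filter.Tendsto.eventually_ge_atTop hF_grow y)
  refine ⟨max 0 ((max X 1) * |y|), ?_⟩
  rintro v ⟨x, hx0, rfl⟩
  rcases le_or_gt x (max X 1) with h | h
  · have : x * y - F x ≤ x * |y| := by
      have := hF_nonneg x hx0
      nlinarith [le_abs_self y, abs_nonneg y]
    refine le_trans this (le_trans ?_ (le_max_right _ _))
    exact mul_le_mul_of_nonneg_right h (abs_nonneg y)
  · have hx1 : (1:ℝ) < x := lt_of_le_of_lt (le_max_right X 1) h
    have hxpos : (0:ℝ) < x := lt_trans one_pos hx1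
    have hFy : y ≤ F x / x := hX x (le_of_lt (lt_of_le_of_lt (le_max_left X 1) h))
    have : x * y ≤ F x := by
      have := mul_le_mul_of_nonneg_left hFy (le_of_lt hxpos)
      rwa [mul_div_cancel₀ _ (ne_of_gt hxpos)] at this
    have : x * y - F x ≤ 0 := by linarith
    exact le_trans this (le_max_left _ _)

lemma neg_Fstar_le (F : ℝ → ℝ) (hF_nonneg : ∀ x : ℝ, 0 ≤ x → 0 ≤ F x)
    (hF_grow : Filter.Tendsto (fun x : ℝ => F x / x) Filter.atTop Filter.atTop)
    {t : ℝ} (ht : 0 ≤ t) (y : ℝ) : -(Fstar F y) ≤ F t - t * y := by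
  have h : t * y - F t ≤ Fstar F y :=
    le_csSup (Fstar_bddAbove F hF_nonneg hF_grow y) ⟨t, ht, rfl⟩
  linarith

/-- Bound on the terms: if `|z| ≤ r` then the `n`-th term is bounded by
`exp (F (max 0 (log r))) / (n+1)^2`. -/
lemma MF_term_bound (F : ℝ → ℝ) (hF_nonneg : ∀ x : ℝ, 0 ≤ x → 0 ≤ F x)
    (hF_grow : Filter.Tendsto (fun x : ℝ => F x / x) Filter.atTop Filter.atTop)
    (z : ℂ) (r : ℝ) (hzr : ‖z‖ ≤ r) (n : ℕ) :
    ‖z ^ (n + 1) / ((n : ℂ) + 1) ^ 2 *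
        (Real.exp (-(Fstar F ((n : ℝ) + 1))) : ℂ)‖ ≤
      Real.exp (F (max 0 (Real.log r))) / ((n : ℝ) + 1) ^ 2 := by
  set t : ℝ := max 0 (Real.log r) with ht
  have ht0 : 0 ≤ t := le_max_left _ _
  have hr_le : r ≤ Real.exp t := by
    rcases le_or_gt r 1 with h | h
    · exact le_trans h (by simpa using Real.exp_le_exp.mpr ht0)
    · calc r = Real.exp (Real.log r) := (Real.exp_log (lt_trans one_pos h)).symm
        _ ≤ Real.exp t := Real.exp_le_exp.mpr (le_max_right _ _)
  have hz_le : ‖z‖ ≤ Real.exp t := le_trans hzr hr_le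
  have hcast : ‖(n : ℂ) + 1‖ = (n : ℝ) + 1 := by
    rw [show ((n : ℂ) + 1) = ((n + 1 : ℕ) : ℂ) by push_cast; ring, Complex.norm_natCast]
    push_cast; ring
  have habs : ‖z ^ (n + 1) / ((n : ℂ) + 1) ^ 2 *
        (Real.exp (-(Fstar F ((n : ℝ) + 1))) : ℂ)‖ =
      (‖z‖) ^ (n + 1) / ((n : ℝ) + 1) ^ 2 * Real.exp (-(Fstar F ((n : ℝ) + 1))) := by
    rw [norm_mul, norm_div, norm_pow, norm_pow, Complex.norm_real, Real.norm_eq_abs,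
      abs_of_pos (Real.exp_pos _), hcast]
  rw [habs]
  have h1 : (‖z‖) ^ (n + 1) ≤ Real.exp (t * ((n : ℝ) + 1)) := by
    calc (‖z‖) ^ (n + 1) ≤ (Real.exp t) ^ (n + 1) :=
          pow_le_pow_left₀ (norm_nonneg z) hz_le _
      _ = Real.exp (t * ((n : ℝ) + 1)) := by
          rw [← Real.exp_nat_mul]
          congr 1
          push_cast; ring
  have h2 : Real.exp (-(Fstar F ((n : ℝ) + 1))) ≤ Real.exp (F t - t * ((n : ℝ) + 1)) :=
    Real.exp_le_exp.mpr (neg_Fstar_le F hF_nonneg hF_grow ht0 _)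
  have hd : (0:ℝ) < ((n : ℝ) + 1) ^ 2 := by positivity
  calc (‖z‖) ^ (n + 1) / ((n : ℝ) + 1) ^ 2 * Real.exp (-(Fstar F ((n : ℝ) + 1)))
      ≤ Real.exp (t * ((n : ℝ) + 1)) / ((n : ℝ) + 1) ^ 2 *
          Real.exp (F t - t * ((n : ℝ) + 1)) := by
        apply mul_le_mul _ h2 (Real.exp_pos _).le (by positivity)
        gcongr
    _ = Real.exp (F t) / ((n : ℝ) + 1) ^ 2 := by
        rw [div_mul_eq_mul_div, ← Real.exp_add]
        congr 2
        ring

lemma hasSum_inv_sq : HasSum (fun n : ℕ => (1:ℝ) / ((n : ℝ) + 1) ^ 2) (Real.pi ^ 2 / 6) := by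
  have h := (hasSum_nat_add_iff' 1).mpr hasSum_zeta_two
  simpa using h

lemma summable_const_div (c : ℝ) : Summable (fun n : ℕ => c / ((n : ℝ) + 1) ^ 2) := by
  simpa [div_eq_mul_inv] using (hasSum_inv_sq.summable.mul_left c)

lemma hasSum_const_div (c : ℝ) :
    HasSum (fun n : ℕ => c / ((n : ℝ) + 1) ^ 2) (c * (Real.pi ^ 2 / 6)) := by
  simpa [div_eq_mul_inv] using hasSum_inv_sq.mul_left c

/-- For an increasing `F : [0,∞) → [0,∞)` with `F(x)/x → ∞`, the series `M_F(z)`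
converges absolutely for every `z ∈ ℂ`, defines an entire function, and satisfies
`|M_F(z)| ≤ (π²/6)·e^{F(log₊ |z|)}`. -/
theorem MF_entire_and_bounded (F : ℝ → ℝ)
    (hF_mono : MonotoneOn F (Set.Ici 0))
    (hF_nonneg : ∀ x : ℝ, 0 ≤ x → 0 ≤ F x)
    (hF_grow : Filter.Tendsto (fun x : ℝ => F x / x) Filter.atTop Filter.atTop) :
    (∀ z : ℂ, Summable (fun n : ℕ =>
      ‖z ^ (n + 1) / ((n : ℂ) + 1) ^ 2 *
        (Real.exp (-(Fstar F ((n : ℝ) + 1))) : ℂ)‖)) ∧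
    Differentiable ℂ (MF F) ∧
    ∀ z : ℂ, ‖MF F z‖ ≤
      Real.pi ^ 2 / 6 * Real.exp (F (max 0 (Real.log (‖z‖)))) := by
  have hsum : ∀ z : ℂ, Summable (fun n : ℕ =>
      ‖z ^ (n + 1) / ((n : ℂ) + 1) ^ 2 *
        (Real.exp (-(Fstar F ((n : ℝ) + 1))) : ℂ)‖) := by
    intro z
    exact Summable.of_nonneg_of_le (fun n => norm_nonneg _)
      (MF_term_bound F hF_nonneg hF_grow z (‖z‖) le_rfl)
      (summable_const_div _)
  refine ⟨hsum, ?_, ?_⟩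
  · -- differentiability
    intro z₀
    have hz₀ : z₀ ∈ Metric.ball (0:ℂ) (‖z₀‖ + 1) := by
      simp [Complex.dist_eq, lt_add_one]
    set R : ℝ := ‖z₀‖ + 1 with hR
    have hdo : DifferentiableOn ℂ (fun w : ℂ => ∑' n : ℕ,
        (w ^ (n + 1) / ((n : ℂ) + 1) ^ 2 * (Real.exp (-(Fstar F ((n : ℝ) + 1))) : ℂ)))
        (Metric.ball (0:ℂ) R) := by
      apply Complex.differentiableOn_tsum_of_summable_norm
        (u := fun n : ℕ => Real.exp (F (max 0 (Real.log R))) / ((n : ℝ) + 1) ^ 2)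
        (summable_const_div _)
      · intro n
        apply DifferentiableOn.mul_const
        apply DifferentiableOn.div_const
        exact (differentiable_pow _).differentiableOn
      · exact Metric.isOpen_ball
      · intro n w hw
        have hwR : ‖w‖ ≤ R := by
          have := Metric.mem_ball.mp hw
          rw [Complex.dist_eq, sub_zero] at this
          exact this.le
        exact MF_term_bound F hF_nonneg hF_grow w R hwR n
    have := (hdo z₀ hz₀).differentiableAt (Metric.isOpen_ball.mem_nhds hz₀)
    exact this
  · intro z
    have h1 : ‖MF F z‖ ≤ ∑' n : ℕ,
        ‖z ^ (n + 1) / ((n : ℂ) + 1) ^ 2 *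
          (Real.exp (-(Fstar F ((n : ℝ) + 1))) : ℂ)‖ := by
      have h := norm_tsum_le_tsum_norm
        (f := fun n : ℕ => z ^ (n + 1) / ((n : ℂ) + 1) ^ 2 *
          (Real.exp (-(Fstar F ((n : ℝ) + 1))) : ℂ))
        (hsum z)
      simpa [MF] using h
    have h2 : ∑' n : ℕ, ‖z ^ (n + 1) / ((n : ℂ) + 1) ^ 2 *
          (Real.exp (-(Fstar F ((n : ℝ) + 1))) : ℂ)‖ ≤
        ∑' n : ℕ, Real.exp (F (max 0 (Real.log (‖z‖)))) / ((n : ℝ) + 1) ^ 2 :=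
      Summable.tsum_le_tsum (MF_term_bound F hF_nonneg hF_grow z (‖z‖) le_rfl) (hsum z)
        (summable_const_div _)
    have h3 : ∑' n : ℕ, Real.exp (F (max 0 (Real.log (‖z‖)))) / ((n : ℝ) + 1) ^ 2 =
        Real.exp (F (max 0 (Real.log (‖z‖)))) * (Real.pi ^ 2 / 6) :=
      (hasSum_const_div _).tsum_eq
    calc ‖MF F z‖ ≤ _ := h1
      _ ≤ _ := h2
      _ = _ := h3
      _ = Real.pi ^ 2 / 6 * Real.exp (F (max 0 (Real.log (‖z‖)))) := by ring
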